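/- For n even, n ≥ 4, if G is an n-vertex graph that is not matching covered, then e(G) ≤ binomial(n-1, 2) + 2, with equality if and only if G is isomorphic to H_{n,3} = K_2 ∨ (K_1 ∪ K_{n-3}) or to K_3 ∨ 3K_1 (the latter only when n = 6). -/

import Mathlib

open SimpleGraph Finset
open scoped Classical

/-- H_{n,γ}: vertex 0 is joined to the γ-1 vertices 1,…,γ-1; vertices 1,…,n-1 form a
clique.  Thus Hgraph n γ = K_{γ-1} ∨ (K_{n-γ} ∪ K_1). -/
def Hgraph (n γ : ℕ) : SimpleGraph (Fin n) :=
  SimpleGraph.fromRel (fun u v =>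
    (0 < u.val ∧ 0 < v.val) ∨ (u.val = 0 ∧ 0 < v.val ∧ v.val < γ))

/-- K_3 ∨ (m-3)K_1 : the first three vertices are mutually adjacent and adjacent to
everything; the remaining vertices are independent. -/
def K3join (m : ℕ) : SimpleGraph (Fin m) :=
  SimpleGraph.fromRel (fun u _ => u.val < 3)

/-- The number of edges of a finite graph. -/
noncomputable def edgeCount {V : Type*} [Fintype V] (G : SimpleGraph V) : ℕ :=
  Nat.card G.edgeSet

/-- G is matching covered: every edge lies in some perfect matching. -/
def IsMatchingCovered {V : Type*} (G : SimpleGraph V) : Prop :=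
  ∀ e ∈ G.edgeSet, ∃ M : G.Subgraph, M.IsPerfectMatching ∧ e ∈ M.edgeSet

set_option linter.unusedVariables false


/-- A perfect matching presented as a fixed-point-free involution along edges. -/
def PMFun {V : Type*} (G : SimpleGraph V) (f : V → V) : Prop :=
  Function.Involutive f ∧ ∀ v, G.Adj v (f v)

def pmSubgraph {V : Type*} (G : SimpleGraph V) (f : V → V) : G.Subgraph where
  verts := Set.univ
  Adj x y := G.Adj x y ∧ f x = y ∧ f y = x
  adj_sub h := h.1
  edge_vert _ := Set.mem_univ _
  symm := ⟨fun x y h => ⟨h.1.symm, h.2.2, h.2.1⟩⟩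

lemma pmSubgraph_isPM {V : Type*} {G : SimpleGraph V} {f : V → V} (hf : PMFun G f) :
    (pmSubgraph G f).IsPerfectMatching := by
  constructor
  · intro v _
    refine ⟨f v, ⟨hf.2 v, rfl, hf.1 v⟩, ?_⟩
    rintro y ⟨_, h1, _⟩
    exact h1.symm
  · intro v; exact Set.mem_univ v

lemma pmSubgraph_edge {V : Type*} {G : SimpleGraph V} {f : V → V} (hf : PMFun G f) (x : V) :
    s(x, f x) ∈ (pmSubgraph G f).edgeSet := by
  rw [SimpleGraph.Subgraph.mem_edgeSet]
  exact ⟨hf.2 x, rfl, hf.1 x⟩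

lemma PMFun.extend {V : Type*} {G : SimpleGraph V} {a b : V} (hab : G.Adj a b)
    {f' : ↥({a,b}ᶜ : Set V) → ↥({a,b}ᶜ : Set V)}
    (hf' : PMFun (G.induce ({a,b}ᶜ : Set V)) f') :
    ∃ f : V → V, PMFun G f ∧ f a = b := by
  classical
  have hmem : ∀ x : V, x ≠ a → x ≠ b → x ∈ ({a,b}ᶜ : Set V) := by
    intro x hx1 hx2; simp [hx1, hx2]
  have hval : ∀ p : ↥({a,b}ᶜ : Set V), (p : V) ≠ a ∧ (p : V) ≠ b := by
    intro p
    have := p.2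
    simp only [Set.mem_compl_iff, Set.mem_insert_iff, Set.mem_singleton_iff] at this
    tauto
  refine ⟨fun x => if hx1 : x = a then b else if hx2 : x = b then a
      else (f' ⟨x, hmem x hx1 hx2⟩ : V), ⟨?_, ?_⟩, by simp⟩
  · intro x
    by_cases hx1 : x = a
    · subst hx1
      simp [hab.ne']
    by_cases hx2 : x = b
    · subst hx2
      simp [hab.ne]
    · have h1 := hval (f' ⟨x, hmem x hx1 hx2⟩)
      simp only [hx1, hx2, dif_neg, not_false_iff, h1.1, h1.2]
      have : (⟨(f' ⟨x, hmem x hx1 hx2⟩ : V), hmem _ h1.1 h1.2⟩ : ↥({a,b}ᶜ : Set V))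
          = f' ⟨x, hmem x hx1 hx2⟩ := Subtype.coe_eta _ _
      rw [this, hf'.1 ⟨x, hmem x hx1 hx2⟩]
  · intro x
    by_cases hx1 : x = a
    · subst hx1; simpa using hab
    by_cases hx2 : x = b
    · subst hx2; simpa [hx1] using hab.symm
    · simp only [hx1, hx2, dif_neg, not_false_iff]
      exact hf'.2 ⟨x, hmem x hx1 hx2⟩

lemma ncard_eq_finset_card {V : Type*} (G : SimpleGraph V) [Fintype G.edgeSet] :
    G.edgeSet.ncard = G.edgeFinset.card := by
  rw [edgeFinset_card, ← Nat.card_eq_fintype_card, Nat.card_coe_set_eq]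

lemma ncard_add_ncard_compl {V : Type*} [Fintype V] (G : SimpleGraph V) :
    G.edgeSet.ncard + Gᶜ.edgeSet.ncard = (Fintype.card V).choose 2 := by
  classical
  rw [ncard_eq_finset_card, ncard_eq_finset_card]
  have hsup : G.edgeFinset ∪ Gᶜ.edgeFinset = (⊤ : SimpleGraph V).edgeFinset := by
    ext e
    rw [Finset.mem_union, mem_edgeFinset, mem_edgeFinset, mem_edgeFinset,
      ← Set.mem_union, ← SimpleGraph.edgeSet_sup, sup_compl_eq_top]
  have hdisj : Disjoint G.edgeFinset Gᶜ.edgeFinset := by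
    rw [Finset.disjoint_left]
    intro e he hce
    rw [mem_edgeFinset] at he hce
    induction e with
    | h x y =>
      rw [SimpleGraph.mem_edgeSet] at he hce
      exact (hce.2 he).elim
  rw [← card_edgeFinset_top_eq_card_choose_two, ← hsup,
    Finset.card_union_of_disjoint hdisj]

lemma induce_compl_eq {V : Type*} (G : SimpleGraph V) (s : Set V) :
    (G.induce s)ᶜ = (Gᶜ).induce s := by
  ext ⟨x, hx⟩ ⟨y, hy⟩
  simp only [compl_adj, comap_adj, Function.Embedding.coe_subtype, ne_eq,
    Subtype.mk.injEq]

lemma induce_edge_image_subset {V : Type*} [Fintype V] (K : SimpleGraph V) (s : Set V)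
    [Fintype (K.induce s).edgeSet] [Fintype K.edgeSet] :
    ((K.induce s).edgeFinset.image (Sym2.map (Subtype.val : s → V))) ⊆ K.edgeFinset := by
  intro e he
  rw [Finset.mem_image] at he
  obtain ⟨e', he', rfl⟩ := he
  rw [mem_edgeFinset] at he' ⊢
  induction e' with
  | h x y =>
    rw [SimpleGraph.mem_edgeSet] at he'
    simpa using he'

lemma induce_edge_card_eq {V : Type*} [Fintype V] (K : SimpleGraph V) (s : Set V)
    [Fintype (K.induce s).edgeSet] :
    ((K.induce s).edgeFinset.image (Sym2.map (Subtype.val : s → V))).card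
      = (K.induce s).edgeFinset.card :=
  Finset.card_image_of_injective _ (Sym2.map.injective Subtype.val_injective)

lemma induce_ncard_add_degree {V : Type*} [Fintype V] (K : SimpleGraph V) [DecidableRel K.Adj] (s : Set V)
    (a : V) (ha : a ∉ s) :
    (K.induce s).edgeSet.ncard + K.degree a ≤ K.edgeSet.ncard := by
  classical
  rw [ncard_eq_finset_card, ncard_eq_finset_card,
    ← induce_edge_card_eq K s, ← card_incidenceFinset_eq_degree]
  have hsub : (K.induce s).edgeFinset.image (Sym2.map (Subtype.val : s → V))
      ∪ K.incidenceFinset a ⊆ K.edgeFinset := by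
    apply Finset.union_subset (induce_edge_image_subset K s)
    intro e he
    rw [mem_incidenceFinset] at he
    exact mem_edgeFinset.2 he.1
  have hdisj : Disjoint ((K.induce s).edgeFinset.image (Sym2.map (Subtype.val : s → V)))
      (K.incidenceFinset a) := by
    rw [Finset.disjoint_left]
    intro e he hie
    rw [Finset.mem_image] at he
    obtain ⟨e', _, rfl⟩ := he
    rw [mem_incidenceFinset] at hie
    have hmem : a ∈ Sym2.map (Subtype.val : s → V) e' := hie.2
    rw [Sym2.mem_map] at hmem
    obtain ⟨w, _, hw⟩ := hmem
    exact ha (hw ▸ w.2)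
  rw [← Finset.card_union_of_disjoint hdisj]
  exact Finset.card_le_card hsub

lemma induce_ncard_le {V : Type*} [Fintype V] (K : SimpleGraph V) (s : Set V) :
    (K.induce s).edgeSet.ncard ≤ K.edgeSet.ncard := by
  classical
  rw [ncard_eq_finset_card, ncard_eq_finset_card, ← induce_edge_card_eq K s]
  exact Finset.card_le_card (induce_edge_image_subset K s)

lemma degree_le_ncard {V : Type*} [Fintype V] (K : SimpleGraph V) [DecidableRel K.Adj] (a : V) :
    K.degree a ≤ K.edgeSet.ncard := by
  classical
  rw [ncard_eq_finset_card, ← card_incidenceFinset_eq_degree]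
  apply Finset.card_le_card
  intro e he
  rw [mem_incidenceFinset] at he
  exact mem_edgeFinset.2 he.1

lemma induce_edge_surj {V : Type*} [Fintype V] (K : SimpleGraph V) (s : Set V)
    (h : K.edgeSet.ncard ≤ (K.induce s).edgeSet.ncard) :
    ∀ x y, K.Adj x y → ∃ (hx : x ∈ s) (hy : y ∈ s), (K.induce s).Adj ⟨x, hx⟩ ⟨y, hy⟩ := by
  classical
  rw [ncard_eq_finset_card, ncard_eq_finset_card] at h
  have heq : (K.induce s).edgeFinset.image (Sym2.map (Subtype.val : s → V))
      = K.edgeFinset := by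
    apply Finset.eq_of_subset_of_card_le (induce_edge_image_subset K s)
    rw [induce_edge_card_eq]; exact h
  intro x y hxy
  have hmm : s(x, y) ∈ K.edgeFinset := mem_edgeFinset.2 hxy
  rw [← heq, Finset.mem_image] at hmm
  obtain ⟨e', he', hmap⟩ := hmm
  induction e' with
  | h p q =>
    rw [mem_edgeFinset] at he'
    simp only [Sym2.map_pair_eq, Sym2.eq, Sym2.rel_iff', Prod.mk.injEq, Prod.swap_prod_mk] at hmap
    rcases hmap with ⟨h1, h2⟩ | ⟨h1, h2⟩
    · exact ⟨h1 ▸ p.2, h2 ▸ q.2, by simpa [Subtype.coe_eta, ← h1, ← h2] using he'⟩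
    · exact ⟨h2 ▸ q.2, h1 ▸ p.2, by
        have := he'.symm
        simpa [Subtype.coe_eta, ← h1, ← h2] using this⟩

lemma cardCompl_pair {V : Type} [Fintype V] {a b : V} (hab : a ≠ b)
    [inst : Fintype ↥(({a,b}ᶜ : Set V))] :
    Fintype.card ↥(({a,b}ᶜ : Set V)) = Fintype.card V - 2 := by
  classical
  have h1 : Nat.card ↥(({a,b}ᶜ : Set V)) = Fintype.card V - 2 := by
    rw [Nat.card_eq_fintype_card, Fintype.card_compl_set]
    congr 1
    rw [Set.card_insert _ (by simp [hab]), Set.card_singleton]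
  rw [← h1, Nat.card_eq_fintype_card]

lemma exists_adj_of_ncard_ne_zero {V : Type} [Fintype V] {G : SimpleGraph V}
    (hc : G.edgeSet.ncard ≠ 0) : ∃ x y, G.Adj x y := by
  rw [ncard_eq_finset_card] at hc
  obtain ⟨e, he⟩ := Finset.card_ne_zero.1 hc
  rw [mem_edgeFinset] at he
  induction e with
  | h x y => exact ⟨x, y, he⟩

lemma one_le_degree_of_adj {V : Type} [Fintype V] {G : SimpleGraph V} [DecidableRel G.Adj] {x y : V}
    (h : G.Adj x y) : 1 ≤ G.degree x := by
  rw [← card_neighborFinset_eq_degree]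
  exact Finset.card_pos.2 ⟨y, (mem_neighborFinset _ _ _).2 h⟩

lemma mem_edgeSet_ncard_pos {V : Type} [Fintype V] {G : SimpleGraph V} [DecidableRel G.Adj] {x y : V}
    (h : G.Adj x y) : G.edgeSet.ncard ≠ 0 := by
  have := le_trans (one_le_degree_of_adj h) (degree_le_ncard G x)
  omega

lemma lemmaA : ∀ (N : ℕ) (V : Type) [Fintype V] (G : SimpleGraph V),
    Fintype.card V ≤ N → Even (Fintype.card V) →
    Gᶜ.edgeSet.ncard ≤ Fintype.card V - 2 → ∃ f, PMFun G f := by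
  intro N
  induction N with
  | zero =>
    intro V _ G hN _ _
    haveI : IsEmpty V := Fintype.card_eq_zero_iff.1 (Nat.le_zero.1 hN)
    exact ⟨id, fun v => rfl, fun v => isEmptyElim v⟩
  | succ N ih =>
    intro V _ G hN he hc
    rcases Nat.eq_zero_or_pos (Fintype.card V) with h0 | hpos
    · haveI : IsEmpty V := Fintype.card_eq_zero_iff.1 h0
      exact ⟨id, fun v => rfl, fun v => isEmptyElim v⟩
    have hmod : Fintype.card V % 2 = 0 := Nat.even_iff.mp he
    have hm2 : 2 ≤ Fintype.card V := by omega
    have main : ∀ a b : V, G.Adj a b →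
        ((Gᶜ).induce ({a,b}ᶜ : Set V)).edgeSet.ncard ≤ (Fintype.card V - 2) - 2 →
        ∃ f, PMFun G f := by
      intro a b hab hc'
      have hcard : Fintype.card ↥({a,b}ᶜ : Set V) = Fintype.card V - 2 :=
        cardCompl_pair hab.ne
      have hcc : ((G.induce ({a,b}ᶜ : Set V))ᶜ).edgeSet.ncard
          = ((Gᶜ).induce ({a,b}ᶜ : Set V)).edgeSet.ncard := by
        rw [induce_compl_eq]
      have h1 : Fintype.card ↥({a,b}ᶜ : Set V) ≤ N := by omega
      have h2 : Even (Fintype.card ↥({a,b}ᶜ : Set V)) := by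
        rw [hcard]; rcases he with ⟨k, hk⟩; exact ⟨k - 1, by omega⟩
      have h3 : ((G.induce ({a,b}ᶜ : Set V))ᶜ).edgeSet.ncard ≤
          Fintype.card ↥({a,b}ᶜ : Set V) - 2 := by omega
      obtain ⟨f', hf'⟩ := ih ↥({a,b}ᶜ : Set V) (G.induce _) h1 h2 h3
      obtain ⟨f, hf, -⟩ := PMFun.extend hab hf'
      exact ⟨f, hf⟩
    rcases Nat.eq_zero_or_pos Gᶜ.edgeSet.ncard with hc0 | hcpos
    · -- complement has no edges: G is complete
      obtain ⟨a, b, hne⟩ := Fintype.exists_pair_of_one_lt_card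
        (α := V) (by omega : 1 < Fintype.card V)
      have hadj : G.Adj a b := by
        by_contra hGab
        exact mem_edgeSet_ncard_pos ((G.compl_adj a b).2 ⟨hne, hGab⟩) hc0
      apply main a b hadj
      have h2 := induce_ncard_add_degree Gᶜ ({a,b}ᶜ : Set V) a (by simp)
      omega
    · -- complement has an edge
      obtain ⟨a, hamax⟩ : ∃ a : V, ∀ x, Gᶜ.degree x ≤ Gᶜ.degree a := by
        obtain ⟨a, -, ha⟩ := Finset.exists_max_image univ (fun v => Gᶜ.degree v)
          (Finset.card_pos.mp (by rw [Finset.card_univ]; omega))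
        exact ⟨a, fun x => ha x (mem_univ x)⟩
      have hd1 : 1 ≤ Gᶜ.degree a := by
        obtain ⟨x, y, hxy⟩ := exists_adj_of_ncard_ne_zero (G := Gᶜ) (by omega)
        exact le_trans (one_le_degree_of_adj hxy) (hamax x)
      have hdc : Gᶜ.degree a ≤ Gᶜ.edgeSet.ncard := degree_le_ncard _ _
      obtain ⟨b, hab⟩ : ∃ b, G.Adj a b := by
        by_contra hno
        push_neg at hno
        have hsub : univ.erase a ⊆ Gᶜ.neighborFinset a := by
          intro v hv
          rw [Finset.mem_erase] at hv
          rw [mem_neighborFinset]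
          exact (G.compl_adj a v).2 ⟨Ne.symm hv.1, fun hA => hno v hA⟩
        have := Finset.card_le_card hsub
        rw [Finset.card_erase_of_mem (mem_univ a), Finset.card_univ,
          card_neighborFinset_eq_degree] at this
        omega
      by_cases hd2 : 2 ≤ Gᶜ.degree a
      · apply main a b hab
        have h2 := induce_ncard_add_degree Gᶜ ({a,b}ᶜ : Set V) a (by simp)
        omega
      · have hd : Gᶜ.degree a = 1 := by omega
        have hsum : 2 * Gᶜ.edgeSet.ncard = ∑ v, Gᶜ.degree v := by
          rw [ncard_eq_finset_card]
          exact (sum_degrees_eq_twice_card_edges _).symm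
        have hble : ∑ v, Gᶜ.degree v ≤ Fintype.card V := by
          calc ∑ v, Gᶜ.degree v ≤ ∑ _v : V, 1 :=
                Finset.sum_le_sum (fun i _ => le_trans (hamax i) (le_of_eq hd))
            _ = Fintype.card V := by simp
        by_cases hm6 : 6 ≤ Fintype.card V
        · apply main a b hab
          have h2 := induce_ncard_add_degree Gᶜ ({a,b}ᶜ : Set V) a (by simp)
          omega
        · -- card V = 4, complement is a nonempty matching
          have hm4 : Fintype.card V = 4 := by omega
          obtain ⟨x, hax⟩ : ∃ x, Gᶜ.Adj a x :=
            (Gᶜ.degree_pos_iff_exists_adj a).1 (by omega)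
          have hNa : Gᶜ.neighborFinset a = {x} := by
            refine (Finset.eq_of_subset_of_card_le ?_ ?_).symm
            · exact Finset.singleton_subset_iff.2 ((mem_neighborFinset _ _ _).2 hax)
            · rw [card_neighborFinset_eq_degree, hd]; simp
          have hNx : Gᶜ.neighborFinset x = {a} := by
            refine (Finset.eq_of_subset_of_card_le ?_ ?_).symm
            · exact Finset.singleton_subset_iff.2 ((mem_neighborFinset _ _ _).2 hax.symm)
            · rw [card_neighborFinset_eq_degree]
              simpa using le_trans (hamax x) (le_of_eq hd)
          have haxne : a ≠ x := hax.ne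
          have hucard : (univ \ {a, x} : Finset V).card = 2 := by
            rw [Finset.card_sdiff_of_subset (Finset.subset_univ _), Finset.card_univ,
              Finset.card_insert_of_notMem (by simp [haxne]), Finset.card_singleton]
            omega
          obtain ⟨r, t, hrt, hrteq⟩ := Finset.card_eq_two.1 hucard
          have hrmem : r ∈ (univ \ {a, x} : Finset V) := by rw [hrteq]; simp
          have htmem : t ∈ (univ \ {a, x} : Finset V) := by rw [hrteq]; simp
          rw [Finset.mem_sdiff] at hrmem htmem
          have hra : r ≠ a := by intro h; apply hrmem.2; simp [h]
          have hrx : r ≠ x := by intro h; apply hrmem.2; simp [h]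
          have hta : t ≠ a := by intro h; apply htmem.2; simp [h]
          have htx : t ≠ x := by intro h; apply htmem.2; simp [h]
          have hGar : G.Adj a r := by
            by_contra hno
            have h1 : r ∈ Gᶜ.neighborFinset a :=
              (mem_neighborFinset _ _ _).2 ((G.compl_adj a r).2 ⟨Ne.symm hra, hno⟩)
            rw [hNa] at h1
            exact hrx (Finset.mem_singleton.1 h1)
          have hGxt : G.Adj x t := by
            by_contra hno
            have h1 : t ∈ Gᶜ.neighborFinset x :=
              (mem_neighborFinset _ _ _).2 ((G.compl_adj x t).2 ⟨Ne.symm htx, hno⟩)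
            rw [hNx] at h1
            exact hta (Finset.mem_singleton.1 h1)
          have hcases : ∀ v : V, v = a ∨ v = x ∨ v = r ∨ v = t := by
            intro v
            by_cases h1 : v = a
            · exact Or.inl h1
            by_cases h2 : v = x
            · exact Or.inr (Or.inl h2)
            have hv : v ∈ (univ \ {a, x} : Finset V) := by
              rw [Finset.mem_sdiff]; simp [h1, h2]
            rw [hrteq] at hv
            rcases Finset.mem_insert.1 hv with h | h
            · exact Or.inr (Or.inr (Or.inl h))
            · exact Or.inr (Or.inr (Or.inr (Finset.mem_singleton.1 h)))
          set f : V → V := fun v => if v = a then r else if v = r then a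
            else if v = x then t else x with hfdef
          have fa : f a = r := by simp [hfdef]
          have fr : f r = a := by simp [hfdef, hra]
          have fx : f x = t := by simp [hfdef, Ne.symm haxne, Ne.symm hrx]
          have ft : f t = x := by simp [hfdef, hta, Ne.symm hrt, htx]
          refine ⟨f, ⟨?_, ?_⟩⟩
          · intro v
            rcases hcases v with rfl | rfl | rfl | rfl <;>
              simp only [fa, fr, fx, ft]
          · intro v
            rcases hcases v with rfl | rfl | rfl | rfl <;>
              simp only [fa, fr, fx, ft] <;>
              first
                | exact hGar
                | exact hGar.symm
                | exact hGxt
                | exact hGxt.symm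

lemma induce_ncard_add_degree2 {V : Type*} [Fintype V] (K : SimpleGraph V) [DecidableRel K.Adj]
    {s : Set V} {a b : V} (ha : a ∉ s) (hb : b ∉ s) (hab : a ≠ b) (hnadj : ¬K.Adj a b) :
    (K.induce s).edgeSet.ncard + K.degree a + K.degree b ≤ K.edgeSet.ncard := by
  classical
  rw [ncard_eq_finset_card, ncard_eq_finset_card, ← induce_edge_card_eq K s,
    ← card_incidenceFinset_eq_degree, ← card_incidenceFinset_eq_degree]
  have himg : ∀ c : V, c ∉ s →
      Disjoint ((K.induce s).edgeFinset.image (Sym2.map (Subtype.val : s → V)))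
        (K.incidenceFinset c) := by
    intro c hcs
    rw [Finset.disjoint_left]
    intro e he hie
    rw [Finset.mem_image] at he
    obtain ⟨e', _, rfl⟩ := he
    rw [mem_incidenceFinset] at hie
    have hmem : c ∈ Sym2.map (Subtype.val : s → V) e' := hie.2
    rw [Sym2.mem_map] at hmem
    obtain ⟨w, _, hw⟩ := hmem
    exact hcs (hw ▸ w.2)
  have hdisj2 : Disjoint (K.incidenceFinset a) (K.incidenceFinset b) := by
    rw [Finset.disjoint_left]
    intro e hea heb
    rw [mem_incidenceFinset] at hea heb
    obtain ⟨hedge, hae⟩ := hea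
    obtain ⟨-, hbe⟩ := heb
    induction e with
    | h x y =>
      rw [SimpleGraph.mem_edgeSet] at hedge
      rw [Sym2.mem_iff] at hae hbe
      rcases hae with rfl | rfl <;> rcases hbe with rfl | rfl
      · exact hab rfl
      · exact hnadj hedge
      · exact hnadj hedge.symm
      · exact hab rfl
  have hsub : ((K.induce s).edgeFinset.image (Sym2.map (Subtype.val : s → V)))
      ∪ (K.incidenceFinset a ∪ K.incidenceFinset b) ⊆ K.edgeFinset := by
    refine Finset.union_subset (induce_edge_image_subset K s) (Finset.union_subset ?_ ?_) <;>
      · intro e he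
        rw [mem_incidenceFinset] at he
        exact mem_edgeFinset.2 he.1
  have hd1 : Disjoint ((K.induce s).edgeFinset.image (Sym2.map (Subtype.val : s → V)))
      (K.incidenceFinset a ∪ K.incidenceFinset b) :=
    Finset.disjoint_union_right.2 ⟨himg a ha, himg b hb⟩
  have hcard := Finset.card_le_card hsub
  rw [Finset.card_union_of_disjoint hd1, Finset.card_union_of_disjoint hdisj2] at hcard
  omega

lemma exists_adj_of_compl_degree_lt {V : Type} [Fintype V] (G : SimpleGraph V) (a : V)
    (h : Gᶜ.degree a < Fintype.card V - 1) : ∃ b, G.Adj a b := by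
  by_contra hno
  push_neg at hno
  have hsub : univ.erase a ⊆ Gᶜ.neighborFinset a := by
    intro v hv
    rw [Finset.mem_erase] at hv
    rw [mem_neighborFinset]
    exact (G.compl_adj a v).2 ⟨Ne.symm hv.1, fun hA => hno v hA⟩
  have := Finset.card_le_card hsub
  rw [Finset.card_erase_of_mem (mem_univ a), Finset.card_univ,
    card_neighborFinset_eq_degree] at this
  omega

lemma degree_le_pred {V : Type} [Fintype V] (G : SimpleGraph V) (a : V) :
    G.degree a ≤ Fintype.card V - 1 := by
  have hsub : G.neighborFinset a ⊆ univ.erase a := by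
    intro v hv
    rw [mem_neighborFinset] at hv
    exact Finset.mem_erase.2 ⟨hv.ne', mem_univ v⟩
  have := Finset.card_le_card hsub
  rwa [Finset.card_erase_of_mem (mem_univ a), Finset.card_univ,
    card_neighborFinset_eq_degree] at this

lemma lemmaB {V : Type} [Fintype V] (G : SimpleGraph V)
    (he : Even (Fintype.card V)) (hpos : 0 < Fintype.card V)
    (hc : Gᶜ.edgeSet.ncard ≤ Fintype.card V - 1)
    (hno : ¬ ∃ f, PMFun G f) :
    Gᶜ.edgeSet.ncard = Fintype.card V - 1 ∧
      ((∃ w : V, ∀ x y : V, Gᶜ.Adj x y ↔ (x ≠ y ∧ (x = w ∨ y = w))) ∨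
       (Fintype.card V = 4 ∧
         ∃ z : V, ∀ x y : V, Gᶜ.Adj x y ↔ (x ≠ y ∧ x ≠ z ∧ y ≠ z))) := by
  classical
  have hmod : Fintype.card V % 2 = 0 := Nat.even_iff.mp he
  have hm2 : 2 ≤ Fintype.card V := by omega
  have hce : Gᶜ.edgeSet.ncard = Fintype.card V - 1 := by
    by_contra hne
    exact hno (lemmaA (Fintype.card V) V G le_rfl he (by omega))
  have main : ∀ a b : V, G.Adj a b →
      ((Gᶜ).induce ({a,b}ᶜ : Set V)).edgeSet.ncard ≤ (Fintype.card V - 2) - 2 → False := by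
    intro a b hab hc'
    have hcard : Fintype.card ↥({a,b}ᶜ : Set V) = Fintype.card V - 2 :=
      cardCompl_pair hab.ne
    have hcc : ((G.induce ({a,b}ᶜ : Set V))ᶜ).edgeSet.ncard
        = ((Gᶜ).induce ({a,b}ᶜ : Set V)).edgeSet.ncard := by
      rw [induce_compl_eq]
    obtain ⟨f', hf'⟩ := lemmaA (Fintype.card ↥({a,b}ᶜ : Set V)) ↥({a,b}ᶜ : Set V)
      (G.induce _) le_rfl
      (by rw [hcard]; rcases he with ⟨k, hk⟩; exact ⟨k - 1, by omega⟩)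
      (by omega)
    obtain ⟨f, hf, -⟩ := PMFun.extend hab hf'
    exact hno ⟨f, hf⟩
  refine ⟨hce, ?_⟩
  obtain ⟨w, hwmax⟩ : ∃ w : V, ∀ x, Gᶜ.degree x ≤ Gᶜ.degree w := by
    obtain ⟨a, -, ha⟩ := Finset.exists_max_image univ (fun v => Gᶜ.degree v)
      (Finset.card_pos.mp (by rw [Finset.card_univ]; omega))
    exact ⟨a, fun x => ha x (mem_univ x)⟩
  by_cases hD : Fintype.card V - 1 ≤ Gᶜ.degree w
  · -- star case
    left
    have hNw : Gᶜ.neighborFinset w = univ.erase w := by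
      refine Finset.eq_of_subset_of_card_le ?_ ?_
      · intro v hv
        rw [mem_neighborFinset] at hv
        exact Finset.mem_erase.2 ⟨hv.ne', mem_univ v⟩
      · rw [Finset.card_erase_of_mem (mem_univ w), Finset.card_univ,
          card_neighborFinset_eq_degree]
        exact hD
    have hInc : Gᶜ.incidenceFinset w = Gᶜ.edgeFinset := by
      refine Finset.eq_of_subset_of_card_le ?_ ?_
      · intro e he
        rw [mem_incidenceFinset] at he
        exact mem_edgeFinset.2 he.1
      · rw [card_incidenceFinset_eq_degree, ← ncard_eq_finset_card, hce]
        exact hD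
    refine ⟨w, fun x y => ⟨fun hadj => ⟨hadj.ne, ?_⟩, fun ⟨hxy, hor⟩ => ?_⟩⟩
    · have h1 : s(x, y) ∈ Gᶜ.incidenceFinset w := by
        rw [hInc]; exact mem_edgeFinset.2 hadj
      rw [mem_incidenceFinset] at h1
      have h2 : w ∈ s(x, y) := h1.2
      rw [Sym2.mem_iff] at h2
      rcases h2 with rfl | rfl
      · exact Or.inl rfl
      · exact Or.inr rfl
    · rcases hor with rfl | rfl
      · have : y ∈ Gᶜ.neighborFinset x := by
          rw [hNw]; exact Finset.mem_erase.2 ⟨Ne.symm hxy, mem_univ y⟩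
        rwa [mem_neighborFinset] at this
      · have : x ∈ Gᶜ.neighborFinset y := by
          rw [hNw]; exact Finset.mem_erase.2 ⟨hxy, mem_univ x⟩
        rw [mem_neighborFinset] at this
        exact this.symm
  · -- max degree ≤ card - 2
    right
    push_neg at hD
    have sub3 : ∀ a b : V, G.Adj a b → Gᶜ.degree a + Gᶜ.degree b ≤ 2 := by
      intro a b hab
      by_contra h3
      push_neg at h3
      have hnadj : ¬Gᶜ.Adj a b := fun hadj => ((G.compl_adj a b).1 hadj).2 hab
      have h2 := induce_ncard_add_degree2 Gᶜ (s := ({a,b}ᶜ : Set V))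
        (by simp) (by simp) hab.ne hnadj
      exact main a b hab (by omega)
    have hDle2 : ∀ x, Gᶜ.degree x ≤ 2 := by
      intro x
      refine le_trans (hwmax x) ?_
      by_contra h3
      push_neg at h3
      obtain ⟨b, hwb⟩ := exists_adj_of_compl_degree_lt G w (by omega)
      have := sub3 w b hwb
      omega
    have hsum : ∑ v, Gᶜ.degree v = 2 * (Fintype.card V - 1) := by
      rw [sum_degrees_eq_twice_card_edges, ← ncard_eq_finset_card, hce]
    have hm4' : 4 ≤ Fintype.card V := by
      obtain ⟨x, y, hxy⟩ := exists_adj_of_ncard_ne_zero (G := Gᶜ) (by omega)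
      have h1 := le_trans (one_le_degree_of_adj hxy) (hwmax x)
      omega
    obtain ⟨t, ht2⟩ : ∃ t : V, Gᶜ.degree t = 2 := by
      by_contra hnt
      push_neg at hnt
      have hall : ∀ v : V, Gᶜ.degree v ≤ 1 := by
        intro v
        have := hDle2 v
        have := hnt v
        omega
      have hb : ∑ v, Gᶜ.degree v ≤ Fintype.card V := by
        calc ∑ v, Gᶜ.degree v ≤ ∑ _v : V, 1 := Finset.sum_le_sum (fun i _ => hall i)
          _ = Fintype.card V := by simp
      omega
    obtain ⟨z, htz⟩ : ∃ z, G.Adj t z :=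
      exists_adj_of_compl_degree_lt G t (by omega)
    have hz0 : Gᶜ.degree z = 0 := by
      have := sub3 t z htz
      omega
    have hGdeg_t : G.degree t = Fintype.card V - 3 := by
      have h1 : Gᶜ.degree t = Fintype.card V - 1 - G.degree t := degree_compl G t
      have h2 := degree_le_pred G t
      omega
    have hZ : G.neighborFinset t ⊆ univ.filter (fun v => Gᶜ.degree v = 0) := by
      intro y hy
      rw [mem_neighborFinset] at hy
      have := sub3 t y hy
      rw [Finset.mem_filter]
      exact ⟨mem_univ y, by omega⟩
    have hZcard : Fintype.card V - 3 ≤ (univ.filter (fun v => Gᶜ.degree v = 0)).card := by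
      have := Finset.card_le_card hZ
      rwa [card_neighborFinset_eq_degree, hGdeg_t] at this
    have hm4 : Fintype.card V = 4 := by
      have hsplit := Finset.sum_filter_add_sum_filter_not univ
        (fun v => Gᶜ.degree v = 0) (fun v => Gᶜ.degree v)
      have hZzero : ∑ v ∈ univ.filter (fun v => Gᶜ.degree v = 0), Gᶜ.degree v = 0 :=
        Finset.sum_eq_zero (fun x hx => (Finset.mem_filter.1 hx).2)
      have hnotZ : ∑ v ∈ univ.filter (fun v => ¬Gᶜ.degree v = 0), Gᶜ.degree v
          ≤ (univ.filter (fun v => ¬Gᶜ.degree v = 0)).card * 2 := by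
        have := Finset.sum_le_card_nsmul (univ.filter (fun v => ¬Gᶜ.degree v = 0))
          (fun v => Gᶜ.degree v) 2 (fun x _ => hDle2 x)
        simpa [smul_eq_mul] using this
      have hcards := Finset.card_filter_add_card_filter_not
        (s := (univ : Finset V)) (p := fun v => Gᶜ.degree v = 0)
      rw [Finset.card_univ] at hcards
      omega
    refine ⟨hm4, z, fun x y => ⟨fun hadj => ?_, fun ⟨hxy, hxz, hyz⟩ => ?_⟩⟩
    · refine ⟨hadj.ne, ?_, ?_⟩
      · rintro rfl
        have := one_le_degree_of_adj hadj
        omega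
      · rintro rfl
        have := one_le_degree_of_adj hadj.symm
        omega
    · -- construct the adjacency
      have hdx : Gᶜ.degree x = 2 := by
        by_contra hd2
        have hdx1 : Gᶜ.degree x ≤ 1 := by have := hDle2 x; omega
        have herase : ∑ v ∈ univ.erase z, Gᶜ.degree v + Gᶜ.degree z = ∑ v, Gᶜ.degree v :=
          Finset.sum_erase_add univ _ (mem_univ z)
        have hlt : ∑ v ∈ univ.erase z, Gᶜ.degree v
            < ∑ _v ∈ univ.erase z, 2 := by
          refine Finset.sum_lt_sum (fun i _ => hDle2 i) ⟨x, ?_, by omega⟩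
          exact Finset.mem_erase.2 ⟨hxz, mem_univ x⟩
        have hconst : ∑ _v ∈ univ.erase z, 2
            = (univ.erase z).card * 2 := by
          rw [Finset.sum_const, smul_eq_mul]
        rw [Finset.card_erase_of_mem (mem_univ z), Finset.card_univ] at hconst
        omega
      have hsub : Gᶜ.neighborFinset x ⊆ (univ.erase z).erase x := by
        intro v hv
        rw [mem_neighborFinset] at hv
        refine Finset.mem_erase.2 ⟨hv.ne', Finset.mem_erase.2 ⟨?_, mem_univ v⟩⟩
        rintro rfl
        have := one_le_degree_of_adj hv.symm
        omega
      have hNx : Gᶜ.neighborFinset x = (univ.erase z).erase x := by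
        refine Finset.eq_of_subset_of_card_le hsub ?_
        rw [Finset.card_erase_of_mem (Finset.mem_erase.2 ⟨hxz, mem_univ x⟩),
          Finset.card_erase_of_mem (mem_univ z), Finset.card_univ,
          card_neighborFinset_eq_degree, hdx]
        omega
      have hy : y ∈ Gᶜ.neighborFinset x := by
        rw [hNx]
        exact Finset.mem_erase.2 ⟨Ne.symm hxy, Finset.mem_erase.2 ⟨hyz, mem_univ y⟩⟩
      rwa [mem_neighborFinset] at hy

lemma exists_perm_three {α : Type*} [DecidableEq α] {a b c a' b' c' : α}
    (hab : a ≠ b) (hac : a ≠ c) (hbc : b ≠ c)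
    (hab' : a' ≠ b') (hac' : a' ≠ c') (hbc' : b' ≠ c') :
    ∃ e : Equiv.Perm α, e a = a' ∧ e b = b' ∧ e c = c' := by
  set e1 := Equiv.swap a a' with he1
  have he1a : e1 a = a' := Equiv.swap_apply_left a a'
  have hb1 : e1 b ≠ a' := by rw [← he1a]; exact e1.injective.ne (Ne.symm hab)
  have hc1 : e1 c ≠ a' := by rw [← he1a]; exact e1.injective.ne (Ne.symm hac)
  have hb1c1 : e1 b ≠ e1 c := e1.injective.ne hbc
  set e2 := Equiv.swap (e1 b) b' with he2
  have he2a : e2 a' = a' := Equiv.swap_apply_of_ne_of_ne (Ne.symm hb1) hab'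
  have he2b : e2 (e1 b) = b' := Equiv.swap_apply_left _ _
  have hc2a : e2 (e1 c) ≠ a' := by rw [← he2a]; exact e2.injective.ne hc1
  have hc2b : e2 (e1 c) ≠ b' := by rw [← he2b]; exact e2.injective.ne (Ne.symm hb1c1)
  set e3 := Equiv.swap (e2 (e1 c)) c' with he3
  refine ⟨(e1.trans e2).trans e3, ?_, ?_, ?_⟩
  · show e3 (e2 (e1 a)) = a'
    rw [he1a, he2a]
    exact Equiv.swap_apply_of_ne_of_ne (Ne.symm hc2a) hac'
  · show e3 (e2 (e1 b)) = b'
    rw [he2b]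
    exact Equiv.swap_apply_of_ne_of_ne (Ne.symm hc2b) hbc'
  · show e3 (e2 (e1 c)) = c'
    exact Equiv.swap_apply_left _ _

lemma choose_split {n : ℕ} (hn : 1 ≤ n) : n.choose 2 = (n - 1).choose 2 + (n - 1) := by
  obtain ⟨m, rfl⟩ : ∃ m, n = m + 1 := ⟨n - 1, by omega⟩
  rw [Nat.choose_succ_succ, Nat.choose_one_right, Nat.add_sub_cancel]
  have h2 : Nat.succ 1 = 2 := rfl
  rw [h2]
  omega

lemma hgraph_compl_adj {n : ℕ} (hn : 4 ≤ n) (x y : Fin n) :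
    (Hgraph n 3)ᶜ.Adj x y ↔ x ≠ y ∧ ((x.val = 0 ∧ 3 ≤ y.val) ∨ (y.val = 0 ∧ 3 ≤ x.val)) := by
  simp only [compl_adj, Hgraph, fromRel_adj, ne_eq, Fin.ext_iff]
  omega

lemma hgraph_ncard {n : ℕ} (hn : 4 ≤ n) :
    (Hgraph n 3).edgeSet.ncard = (n - 1).choose 2 + 2 := by
  classical
  have hcompl : (Hgraph n 3)ᶜ.edgeSet.ncard = n - 3 := by
    rw [ncard_eq_finset_card]
    have hinc : (Hgraph n 3)ᶜ.incidenceFinset (⟨0, by omega⟩ : Fin n)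
        = (Hgraph n 3)ᶜ.edgeFinset := by
      refine Finset.Subset.antisymm ?_ ?_
      · intro e he
        rw [mem_incidenceFinset] at he
        exact mem_edgeFinset.2 he.1
      · intro e he
        rw [mem_edgeFinset] at he
        rw [mem_incidenceFinset]
        refine ⟨he, ?_⟩
        induction e with
        | h x y =>
          rw [SimpleGraph.mem_edgeSet] at he
          rw [(hgraph_compl_adj hn x y)] at he
          rw [Sym2.mem_iff]
          rcases he.2 with ⟨h0, -⟩ | ⟨h0, -⟩
          · exact Or.inl (Fin.ext h0).symm
          · exact Or.inr (Fin.ext h0).symm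
    rw [← hinc, card_incidenceFinset_eq_degree]
    have hnb : (Hgraph n 3)ᶜ.neighborFinset (⟨0, by omega⟩ : Fin n)
        = univ.filter (fun y : Fin n => 3 ≤ y.val) := by
      ext y
      simp only [mem_neighborFinset, Finset.mem_filter, mem_univ, true_and,
        hgraph_compl_adj hn, ne_eq, Fin.ext_iff]
      omega
    rw [← card_neighborFinset_eq_degree, hnb]
    have h2 : univ.filter (fun y : Fin n => 3 ≤ y.val)
        = univ \ univ.filter (fun y : Fin n => y.val < 3) := by
      ext y
      simp only [Finset.mem_filter, Finset.mem_sdiff, mem_univ, true_and]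
      omega
    have h3 : univ.filter (fun y : Fin n => y.val < 3)
        = {(⟨0, by omega⟩ : Fin n), ⟨1, by omega⟩, ⟨2, by omega⟩} := by
      ext y
      simp only [Finset.mem_filter, mem_univ, true_and, Finset.mem_insert,
        Finset.mem_singleton, Fin.ext_iff]
      omega
    rw [h2, Finset.card_sdiff_of_subset (Finset.filter_subset _ _), Finset.card_univ,
      Fintype.card_fin, h3,
      Finset.card_insert_of_notMem (by simp [Fin.ext_iff]),
      Finset.card_insert_of_notMem (by simp [Fin.ext_iff]),
      Finset.card_singleton]
  have htot := ncard_add_ncard_compl (Hgraph n 3)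
  rw [Fintype.card_fin] at htot
  have hch := choose_split (n := n) (by omega)
  have hle : n - 1 ≤ n.choose 2 := by omega
  omega

lemma k3join_adj (x y : Fin 6) :
    (K3join 6).Adj x y ↔ x ≠ y ∧ (x.val < 3 ∨ y.val < 3) := by
  simp only [K3join, fromRel_adj]

lemma k3join_ncard : (K3join 6).edgeSet.ncard = 12 := by
  classical
  have hdegs : ∀ v : Fin 6, v.val < 3 → (K3join 6).degree v = 5 := by
    intro v hv
    rw [← card_neighborFinset_eq_degree]
    have hnb : (K3join 6).neighborFinset v = univ.erase v := by
      ext y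
      simp only [mem_neighborFinset, Finset.mem_erase, mem_univ, and_true,
        k3join_adj, ne_eq]
      constructor
      · rintro ⟨h1, -⟩ h2; exact h1 (h2 ▸ rfl)
      · intro h1; exact ⟨fun hh => h1 hh.symm, Or.inl hv⟩
    rw [hnb, Finset.card_erase_of_mem (mem_univ v), Finset.card_univ, Fintype.card_fin]
  have hdegb : ∀ v : Fin 6, 3 ≤ v.val → (K3join 6).degree v = 3 := by
    intro v hv
    rw [← card_neighborFinset_eq_degree]
    have hnb : (K3join 6).neighborFinset v = univ.filter (fun y : Fin 6 => y.val < 3) := by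
      ext y
      simp only [mem_neighborFinset, Finset.mem_filter, mem_univ, true_and,
        k3join_adj, ne_eq, Fin.ext_iff]
      omega
    have h3 : univ.filter (fun y : Fin 6 => y.val < 3)
        = {(⟨0, by omega⟩ : Fin 6), ⟨1, by omega⟩, ⟨2, by omega⟩} := by
      ext y
      simp only [Finset.mem_filter, mem_univ, true_and, Finset.mem_insert,
        Finset.mem_singleton, Fin.ext_iff]
      omega
    rw [hnb, h3,
      Finset.card_insert_of_notMem (by simp [Fin.ext_iff]),
      Finset.card_insert_of_notMem (by simp [Fin.ext_iff]),
      Finset.card_singleton]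
  have hsum := sum_degrees_eq_twice_card_edges (K3join 6)
  rw [Fin.sum_univ_six] at hsum
  rw [hdegs 0 (by decide), hdegs 1 (by decide), hdegs 2 (by decide),
    hdegb 3 (by decide), hdegb 4 (by decide), hdegb 5 (by decide)] at hsum
  rw [ncard_eq_finset_card]
  omega

/-- For even n ≥ 4, every n-vertex graph that is not matching covered has at most
C(n-1,2) + 2 edges, with equality iff G ≅ H_{n,3} or (n = 6 and) G ≅ K_3 ∨ 3K_1. -/
theorem size_extremal_non_matchingCovered {n : ℕ} (hn : 4 ≤ n) (he : Even n)
    (G : SimpleGraph (Fin n)) (h : ¬ IsMatchingCovered G) :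
    edgeCount G ≤ (n - 1).choose 2 + 2 ∧
      (edgeCount G = (n - 1).choose 2 + 2 ↔
        Nonempty (G ≃g Hgraph n 3) ∨ (n = 6 ∧ Nonempty (G ≃g K3join n))) := by
  classical
  have hmod : n % 2 = 0 := Nat.even_iff.mp he
  rw [IsMatchingCovered] at h
  push_neg at h
  obtain ⟨e, heE, hnoM⟩ := h
  revert heE hnoM
  induction e using Sym2.ind with
  | _ u v =>
  intro heE hnoM
  have huv : G.Adj u v := (SimpleGraph.mem_edgeSet G).1 heE
  set S : Set (Fin n) := ({u, v}ᶜ : Set (Fin n)) with hSdef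
  have hSmem : ∀ x : Fin n, x ∈ S ↔ (x ≠ u ∧ x ≠ v) := by
    intro x; rw [hSdef]; simp
  have hcardS : Fintype.card ↥S = n - 2 := by
    have hq := cardCompl_pair (V := Fin n) huv.ne (inst := inferInstance)
    rw [Fintype.card_fin] at hq
    exact hq
  have hnoPM : ¬ ∃ f, PMFun (G.induce S) f := by
    rintro ⟨f', hf'⟩
    obtain ⟨f, hf, hfu⟩ := PMFun.extend huv hf'
    have hPM := pmSubgraph_isPM hf
    have hedge := pmSubgraph_edge hf u
    rw [hfu] at hedge
    exact hnoM _ hPM hedge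
  have hkey : n - 3 ≤ ((G.induce S)ᶜ).edgeSet.ncard := by
    by_contra hlt
    push_neg at hlt
    refine hnoPM (lemmaA (Fintype.card ↥S) _ _ le_rfl ?_ ?_)
    · rw [hcardS]; exact Nat.even_iff.2 (by omega)
    · rw [hcardS]; omega
  have hup : ((G.induce S)ᶜ).edgeSet.ncard ≤ Gᶜ.edgeSet.ncard := by
    rw [induce_compl_eq]
    exact induce_ncard_le Gᶜ S
  have htot := ncard_add_ncard_compl G
  rw [Fintype.card_fin] at htot
  have hch := choose_split (n := n) (by omega)
  have hEC : edgeCount G = G.edgeSet.ncard := by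
    unfold edgeCount
    exact Nat.card_coe_set_eq _
  refine ⟨by omega, ?_, ?_⟩
  · -- equality implies structure
    intro heq
    have hcompl : Gᶜ.edgeSet.ncard = n - 3 := by omega
    have hcH : ((G.induce S)ᶜ).edgeSet.ncard ≤ Fintype.card ↥S - 1 := by
      rw [hcardS]; omega
    obtain ⟨hceq, hstruct⟩ := lemmaB (G.induce S)
      (by rw [hcardS]; exact Nat.even_iff.2 (by omega)) (by rw [hcardS]; omega) hcH hnoPM
    rw [hcardS] at hceq
    have hindeq : ((Gᶜ).induce S).edgeSet.ncard = ((G.induce S)ᶜ).edgeSet.ncard := by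
      rw [induce_compl_eq]
    have hsurj := induce_edge_surj Gᶜ S (by omega)
    have hgeq : (G.induce S)ᶜ = (Gᶜ).induce S := induce_compl_eq G S
    have hcompl_iff : ∀ x y : Fin n, G.Adj x y ↔ (x ≠ y ∧ ¬ Gᶜ.Adj x y) := by
      intro x y
      constructor
      · intro hxy; exact ⟨hxy.ne, fun hcadj => ((G.compl_adj x y).1 hcadj).2 hxy⟩
      · rintro ⟨hne, hnc⟩; by_contra hng; exact hnc ((G.compl_adj x y).2 ⟨hne, hng⟩)
    rcases hstruct with ⟨w, hstar⟩ | ⟨hm4, z, htri⟩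
    · -- star case: G ≃g Hgraph n 3
      left
      simp only [hgeq] at hstar
      have hwu : (↑w : Fin n) ≠ u := ((hSmem ↑w).1 w.2).1
      have hwv : (↑w : Fin n) ≠ v := ((hSmem ↑w).1 w.2).2
      have hchar : ∀ x y : Fin n,
          Gᶜ.Adj x y ↔ (x ≠ y ∧ x ∈ S ∧ y ∈ S ∧ (x = ↑w ∨ y = ↑w)) := by
        intro x y
        constructor
        · intro hadj
          obtain ⟨hx, hy, hadj'⟩ := hsurj x y hadj
          obtain ⟨hne, hor⟩ := (hstar ⟨x, hx⟩ ⟨y, hy⟩).1 hadj'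
          refine ⟨hadj.ne, hx, hy, ?_⟩
          rcases hor with hh | hh
          · exact Or.inl (congrArg Subtype.val hh)
          · exact Or.inr (congrArg Subtype.val hh)
        · rintro ⟨hxy, hx, hy, hor⟩
          have hadj' : ((Gᶜ).induce S).Adj ⟨x, hx⟩ ⟨y, hy⟩ := by
            refine (hstar ⟨x, hx⟩ ⟨y, hy⟩).2
              ⟨fun hh => hxy (congrArg Subtype.val hh), ?_⟩
            rcases hor with hh | hh
            · exact Or.inl (Subtype.ext hh)
            · exact Or.inr (Subtype.ext hh)
          exact hadj'
      have hGadj : ∀ x y : Fin n, G.Adj x y ↔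
          (x ≠ y ∧ (x = ↑w → (y = u ∨ y = v)) ∧ (y = ↑w → (x = u ∨ x = v))) := by
        intro x y
        rw [hcompl_iff x y, hchar x y, hSmem x, hSmem y]
        constructor
        · rintro ⟨hne, hnc⟩
          refine ⟨hne, ?_, ?_⟩
          · rintro rfl
            by_contra hcon
            push_neg at hcon
            exact hnc ⟨hne, ⟨hwu, hwv⟩, ⟨hcon.1, hcon.2⟩, Or.inl rfl⟩
          · rintro rfl
            by_contra hcon
            push_neg at hcon
            exact hnc ⟨hne, ⟨hcon.1, hcon.2⟩, ⟨hwu, hwv⟩, Or.inr rfl⟩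
        · rintro ⟨hne, h1, h2⟩
          refine ⟨hne, ?_⟩
          rintro ⟨-, ⟨hxu, hxv⟩, ⟨hyu, hyv⟩, hw | hw⟩
          · rcases h1 hw with rfl | rfl
            · exact hyu rfl
            · exact hyv rfl
          · rcases h2 hw with rfl | rfl
            · exact hxu rfl
            · exact hxv rfl
      obtain ⟨eqv, h0, h1, h2⟩ := exists_perm_three (a := (↑w : Fin n)) (b := u) (c := v)
        (a' := (⟨0, by omega⟩ : Fin n)) (b' := ⟨1, by omega⟩) (c' := ⟨2, by omega⟩)
        hwu hwv huv.ne (by simp [Fin.ext_iff]) (by simp [Fin.ext_iff]) (by simp [Fin.ext_iff])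
      have h0v : (eqv ↑w).val = 0 := by rw [h0]
      have h1v : (eqv u).val = 1 := by rw [h1]
      have h2v : (eqv v).val = 2 := by rw [h2]
      have hvgen : ∀ t c : Fin n, ((eqv t).val = (eqv c).val ↔ t = c) := by
        intro t c
        constructor
        · intro hh; exact eqv.injective (Fin.ext hh)
        · rintro rfl; rfl
      have hval0 : ∀ t : Fin n, ((eqv t).val = 0 ↔ t = ↑w) := by
        intro t; rw [← h0v]; exact hvgen t ↑w
      have hval1 : ∀ t : Fin n, ((eqv t).val = 1 ↔ t = u) := by
        intro t; rw [← h1v]; exact hvgen t u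
      have hval2 : ∀ t : Fin n, ((eqv t).val = 2 ↔ t = v) := by
        intro t; rw [← h2v]; exact hvgen t v
      refine ⟨⟨eqv, @fun x y => ?_⟩⟩
      show (Hgraph n 3).Adj (eqv x) (eqv y) ↔ G.Adj x y
      rw [hGadj x y]
      simp only [Hgraph, fromRel_adj, ne_eq]
      rw [← hval0 x, ← hval0 y, ← hval1 x, ← hval1 y, ← hval2 x, ← hval2 y, ← hvgen x y]
      simp only [Fin.ext_iff]
      omega
    · -- triangle case: n = 6, G ≃g K3join 6
      right
      have hn6 : n = 6 := by omega
      subst hn6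
      simp only [hgeq] at htri
      have hzu : (↑z : Fin 6) ≠ u := ((hSmem ↑z).1 z.2).1
      have hzv : (↑z : Fin 6) ≠ v := ((hSmem ↑z).1 z.2).2
      have hchar : ∀ x y : Fin 6,
          Gᶜ.Adj x y ↔ (x ≠ y ∧ x ∈ S ∧ y ∈ S ∧ x ≠ ↑z ∧ y ≠ ↑z) := by
        intro x y
        constructor
        · intro hadj
          obtain ⟨hx, hy, hadj'⟩ := hsurj x y hadj
          obtain ⟨hne, hxz, hyz⟩ := (htri ⟨x, hx⟩ ⟨y, hy⟩).1 hadj'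
          exact ⟨hadj.ne, hx, hy, fun hh => hxz (Subtype.ext hh),
            fun hh => hyz (Subtype.ext hh)⟩
        · rintro ⟨hxy, hx, hy, hxz, hyz⟩
          have hadj' : ((Gᶜ).induce S).Adj ⟨x, hx⟩ ⟨y, hy⟩ :=
            (htri ⟨x, hx⟩ ⟨y, hy⟩).2
              ⟨fun hh => hxy (congrArg Subtype.val hh),
               fun hh => hxz (congrArg Subtype.val hh),
               fun hh => hyz (congrArg Subtype.val hh)⟩
          exact hadj'
      have hGadj : ∀ x y : Fin 6, G.Adj x y ↔
          (x ≠ y ∧ ((x = u ∨ x = v ∨ x = ↑z) ∨ (y = u ∨ y = v ∨ y = ↑z))) := by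
        intro x y
        rw [hcompl_iff x y, hchar x y, hSmem x, hSmem y]
        constructor
        · rintro ⟨hne, hnc⟩
          refine ⟨hne, ?_⟩
          by_contra hcon
          push_neg at hcon
          obtain ⟨⟨hxu, hxv, hxz⟩, ⟨hyu, hyv, hyz⟩⟩ := hcon
          exact hnc ⟨hne, ⟨hxu, hxv⟩, ⟨hyu, hyv⟩, hxz, hyz⟩
        · rintro ⟨hne, hor⟩
          refine ⟨hne, ?_⟩
          rintro ⟨-, ⟨hxu, hxv⟩, ⟨hyu, hyv⟩, hxz, hyz⟩
          rcases hor with (rfl | rfl | rfl) | (rfl | rfl | rfl)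
          · exact hxu rfl
          · exact hxv rfl
          · exact hxz rfl
          · exact hyu rfl
          · exact hyv rfl
          · exact hyz rfl
      obtain ⟨eqv, h0, h1, h2⟩ := exists_perm_three (a := u) (b := v) (c := (↑z : Fin 6))
        (a' := (⟨0, by omega⟩ : Fin 6)) (b' := ⟨1, by omega⟩) (c' := ⟨2, by omega⟩)
        huv.ne (Ne.symm hzu) (Ne.symm hzv)
        (by simp [Fin.ext_iff]) (by simp [Fin.ext_iff]) (by simp [Fin.ext_iff])
      have h0v : (eqv u).val = 0 := by rw [h0]
      have h1v : (eqv v).val = 1 := by rw [h1]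
      have h2v : (eqv ↑z).val = 2 := by rw [h2]
      have hvgen : ∀ t c : Fin 6, ((eqv t).val = (eqv c).val ↔ t = c) := by
        intro t c
        constructor
        · intro hh; exact eqv.injective (Fin.ext hh)
        · rintro rfl; rfl
      have hval0 : ∀ t : Fin 6, ((eqv t).val = 0 ↔ t = u) := by
        intro t; rw [← h0v]; exact hvgen t u
      have hval1 : ∀ t : Fin 6, ((eqv t).val = 1 ↔ t = v) := by
        intro t; rw [← h1v]; exact hvgen t v
      have hval2 : ∀ t : Fin 6, ((eqv t).val = 2 ↔ t = ↑z) := by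
        intro t; rw [← h2v]; exact hvgen t ↑z
      refine ⟨rfl, ⟨⟨eqv, @fun x y => ?_⟩⟩⟩
      show (K3join 6).Adj (eqv x) (eqv y) ↔ G.Adj x y
      rw [hGadj x y]
      simp only [K3join, fromRel_adj, ne_eq]
      rw [← hval0 x, ← hval0 y, ← hval1 x, ← hval1 y, ← hval2 x, ← hval2 y, ← hvgen x y]
      simp only [Fin.ext_iff]
      omega
  · -- structure implies equality
    rintro (hiso | ⟨hn6, hiso⟩)
    · obtain ⟨iso⟩ := hiso
      have h1 : G.edgeSet.ncard = (Hgraph n 3).edgeSet.ncard := by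
        rw [← Nat.card_coe_set_eq, ← Nat.card_coe_set_eq]
        exact Nat.card_congr (Iso.mapEdgeSet iso)
      rw [hEC, h1, hgraph_ncard hn]
    · obtain ⟨iso⟩ := hiso
      subst hn6
      have h1 : G.edgeSet.ncard = (K3join 6).edgeSet.ncard := by
        rw [← Nat.card_coe_set_eq, ← Nat.card_coe_set_eq]
        exact Nat.card_congr (Iso.mapEdgeSet iso)
      rw [hEC, h1, k3join_ncard]
      decide
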